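/- Let T ⊆ ⋃_N ∏_{n<N} a_n be the full finitely-branching tree of sequences with n-th entry in the finite nonempty set a_n, equipped at each node of length n with an F₀(n)-additive logarithmic measure ‖·‖_n on a_n whose value on the full set a_n tends to infinity with n. If W ⊆ T and there is no subtree T' ≤* T all of whose branches meet W, then there is a subtree T' with T' ∩ W = ∅, T' ≤* T, obtained by removing at each node ν the successors lying in the 'promotable' set, and at each node the surviving successor set has measure ≥ ‖succ_T(ν)‖_ν − 1. -/

import Mathlib

/-- `S` is a subtree of the full tree `T = ⋃_N ∏_{n<N} a n` of finite sequences whose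
`n`-th entry lies in `a n`: it contains the root, its nodes are legal, and it is closed
under initial segments. -/
def IsTree (a : ℕ → Finset ℕ) (S : Set (List ℕ)) : Prop :=
  ([] ∈ S) ∧ (∀ l ∈ S, ∀ i : Fin l.length, l.get i ∈ a i) ∧
    (∀ (l : List ℕ) (x : ℕ), l ++ [x] ∈ S → l ∈ S)

/-- The set of immediate successors of the node `l` in the tree `S`. -/
def Succs (S : Set (List ℕ)) (l : List ℕ) : Set ℕ := {x : ℕ | l ++ [x] ∈ S}

/-- `S ≤* T` for the full tree `T`: `S` is a subtree with no dead ends such that at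
each node `l` of `S` the surviving successor set has measure at least
`‖succ_T(l)‖ − 1 = ‖a (length l)‖ − 1`. -/
def GoodSubtree (a : ℕ → Finset ℕ) (norm : ℕ → Set ℕ → ℕ) (S : Set (List ℕ)) : Prop :=
  IsTree a S ∧ (∀ l ∈ S, (Succs S l).Nonempty) ∧
    ∀ l ∈ S, norm l.length (↑(a l.length)) - 1 ≤ norm l.length (Succs S l)

/-- `f : ℕ → ℕ` is a branch of `S`: all its initial segments are nodes of `S`. -/
def BranchIn (S : Set (List ℕ)) (f : ℕ → ℕ) : Prop :=
  ∀ n : ℕ, (List.ofFn fun i : Fin n => f i) ∈ S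

/-- A node of the full tree: each entry lies in the corresponding `a n`. -/
def Legal (a : ℕ → Finset ℕ) (l : List ℕ) : Prop :=
  ∀ i : Fin l.length, l.get i ∈ a i

/-- A good subtree with stem `l`: all nodes comparable with `l`, legal, prefix-closed,
no dead ends, and the measure condition at every node extending `l`. -/
def GoodAbove (a : ℕ → Finset ℕ) (norm : ℕ → Set ℕ → ℕ) (l : List ℕ)
    (S : Set (List ℕ)) : Prop :=
  l ∈ S ∧ (∀ m ∈ S, m <+: l ∨ l <+: m) ∧ (∀ m ∈ S, Legal a m) ∧
  (∀ (m : List ℕ) (x : ℕ), m ++ [x] ∈ S → m ∈ S) ∧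
  (∀ m ∈ S, (Succs S m).Nonempty) ∧
  (∀ m ∈ S, l <+: m → norm m.length (↑(a m.length)) - 1 ≤ norm m.length (Succs S m))

/-- `l ∈ T^W` : some good subtree with stem `l` has all branches meeting `W`. -/
def Bad (a : ℕ → Finset ℕ) (norm : ℕ → Set ℕ → ℕ) (W : Set (List ℕ))
    (l : List ℕ) : Prop :=
  ∃ S, GoodAbove a norm l S ∧
    ∀ f : ℕ → ℕ, BranchIn S f → ∃ n : ℕ, (List.ofFn fun i : Fin n => f i) ∈ W

lemma Legal.of_prefix {a : ℕ → Finset ℕ} {p m : List ℕ} (hp : p <+: m)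
    (h : Legal a m) : Legal a p := by
  obtain ⟨t, rfl⟩ := hp
  intro i
  have h2 := h ⟨(i : ℕ), by simp [List.length_append]; omega⟩
  simp only [List.get_eq_getElem] at h2 ⊢
  rwa [List.getElem_append_left i.isLt] at h2

lemma Legal.concat {a : ℕ → Finset ℕ} {l : List ℕ} {x : ℕ} (hl : Legal a l)
    (hx : x ∈ a l.length) : Legal a (l ++ [x]) := by
  intro i
  simp only [List.get_eq_getElem]
  rcases lt_or_ge (i : ℕ) l.length with h | h
  · rw [List.getElem_append_left h]
    exact hl ⟨(i : ℕ), h⟩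
  · have hi : (i : ℕ) = l.length := by
      have := i.isLt; simp [List.length_append] at this; omega
    rw [List.getElem_concat_length hi]
    rw [hi]; exact hx

lemma Legal.concat_mem {a : ℕ → Finset ℕ} {l : List ℕ} {x : ℕ}
    (h : Legal a (l ++ [x])) : x ∈ a l.length := by
  have h2 := h ⟨l.length, by simp [List.length_append]⟩
  simp only [List.get_eq_getElem] at h2
  rwa [List.getElem_concat_length rfl] at h2

lemma mem_of_prefix_closed {S : Set (List ℕ)}
    (hcl : ∀ (m : List ℕ) (x : ℕ), m ++ [x] ∈ S → m ∈ S) :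
    ∀ m ∈ S, ∀ p, p <+: m → p ∈ S := by
  intro m
  induction m using List.reverseRecOn with
  | nil => intro hm p hp; rwa [List.prefix_nil.mp hp]
  | append_singleton m x IH =>
    intro hm p hp
    rcases List.prefix_concat_iff.mp hp with rfl | hp
    · exact hm
    · exact IH (hcl m x hm) p hp

lemma ofFn_prefix (f : ℕ → ℕ) {n m : ℕ} (h : n ≤ m) :
    (List.ofFn fun i : Fin n => f i) <+: (List.ofFn fun i : Fin m => f i) := by
  obtain ⟨k, rfl⟩ := Nat.exists_eq_add_of_le h
  rw [List.ofFn_add]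
  have : (List.ofFn fun i : Fin n => f ((Fin.castAdd k i : Fin (n + k)) : ℕ))
      = List.ofFn fun i : Fin n => f i := by
    congr 1
  show _ <+: (List.ofFn fun i : Fin n => f i) ++ _
  exact List.prefix_append _ _

lemma ofFn_concat (f : ℕ → ℕ) (n : ℕ) :
    (List.ofFn fun i : Fin (n + 1) => f i)
      = (List.ofFn fun i : Fin n => f i) ++ [f n] := by
  rw [List.ofFn_succ']
  simp [List.concat_eq_append]

/-- Glueing lemma: if a successor set of measure `≥ ‖a n‖ − 1` consists of Bad nodes,
then the node itself is Bad. -/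
lemma glue (a : ℕ → Finset ℕ) (norm : ℕ → Set ℕ → ℕ) (W : Set (List ℕ))
    (mono : ∀ n, ∀ x y : Set ℕ, x.Nonempty → x ⊆ y → y ⊆ ↑(a n) →
      norm n x ≤ norm n y)
    {l : List ℕ} (hl : Legal a l) {G : Set ℕ}
    (hGa : G ⊆ ↑(a l.length)) (hGne : G.Nonempty)
    (hGn : norm l.length (↑(a l.length)) - 1 ≤ norm l.length G)
    (hB : ∀ x ∈ G, Bad a norm W (l ++ [x])) : Bad a norm W l := by
  classical
  have key : ∀ x : ℕ, ∃ S, x ∈ G → GoodAbove a norm (l ++ [x]) S ∧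
      ∀ f : ℕ → ℕ, BranchIn S f → ∃ n : ℕ, (List.ofFn fun i : Fin n => f i) ∈ W := by
    intro x
    by_cases hx : x ∈ G
    · obtain ⟨S, hS⟩ := hB x hx; exact ⟨S, fun _ => hS⟩
    · exact ⟨∅, fun h => absurd h hx⟩
  choose S hS using key
  set T : Set (List ℕ) := {m | m <+: l ∨ ∃ x ∈ G, m ∈ S x} with hT
  have hsub : ∀ x ∈ G, S x ⊆ T := fun x hx m hm => Or.inr ⟨x, hx, hm⟩
  have hlegal : ∀ m ∈ T, Legal a m := by
    rintro m (hp | ⟨x, hx, hm⟩)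
    · exact Legal.of_prefix hp hl
    · exact ((hS x hx).1).2.2.1 m hm
  have hcomp : ∀ m ∈ T, m <+: l ∨ l <+: m := by
    rintro m (hp | ⟨x, hx, hm⟩)
    · exact Or.inl hp
    · rcases ((hS x hx).1).2.1 m hm with h | h
      · rcases List.prefix_concat_iff.mp h with rfl | h
        · exact Or.inr ⟨[x], rfl⟩
        · exact Or.inl h
      · exact Or.inr (List.IsPrefix.trans ⟨[x], rfl⟩ h)
  have hcl : ∀ (m : List ℕ) (x : ℕ), m ++ [x] ∈ T → m ∈ T := by
    rintro m y (hp | ⟨x, hx, hm⟩)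
    · exact Or.inl (List.IsPrefix.trans ⟨[y], rfl⟩ hp)
    · exact Or.inr ⟨x, hx, ((hS x hx).1).2.2.2.1 m y hm⟩
  have hroot : l ∈ T := Or.inl (List.prefix_refl l)
  have hsuccsub : ∀ m : List ℕ, Succs T m ⊆ ↑(a m.length) := by
    intro m x hx
    exact Legal.concat_mem (hlegal _ hx)
  have hne : ∀ m ∈ T, (Succs T m).Nonempty := by
    rintro m (hp | ⟨x, hx, hm⟩)
    · by_cases hml : m = l
      · subst hml
        obtain ⟨x, hx⟩ := hGne
        exact ⟨x, hsub x hx ((hS x hx).1).1⟩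
      · obtain ⟨t, rfl⟩ := hp
        cases t with
        | nil => exact absurd (by simp) hml
        | cons y t' => exact ⟨y, Or.inl ⟨t', by simp⟩⟩
    · obtain ⟨y, hy⟩ := ((hS x hx).1).2.2.2.2.1 m hm
      exact ⟨y, hsub x hx hy⟩
  have hmeas : ∀ m ∈ T, l <+: m →
      norm m.length (↑(a m.length)) - 1 ≤ norm m.length (Succs T m) := by
    intro m hm hlm
    by_cases hml : m = l
    · subst hml
      have hGsub : G ⊆ Succs T m := fun x hx => hsub x hx ((hS x hx).1).1
      exact hGn.trans (mono _ _ _ hGne hGsub (hsuccsub m))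
    · have hlen : l.length < m.length := by
        rcases lt_or_eq_of_le hlm.length_le with h | h
        · exact h
        · exact absurd (hlm.eq_of_length h).symm hml
      have hm' : ∃ x ∈ G, m ∈ S x := by
        rcases hm with hp | h
        · exact absurd hp.length_le (by omega)
        · exact h
      obtain ⟨x, hx, hmS⟩ := hm'
      have hpre : l ++ [x] <+: m := by
        rcases ((hS x hx).1).2.1 m hmS with h | h
        · have : m = l ++ [x] := h.eq_of_length (le_antisymm h.length_le
            (by simp [List.length_append]; omega))
          rw [this]
        · exact h
      have h1 := ((hS x hx).1).2.2.2.2.2 m hmS hpre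
      have h2 : Succs (S x) m ⊆ Succs T m := fun y hy => hsub x hx hy
      have h3 := ((hS x hx).1).2.2.2.2.1 m hmS
      exact h1.trans (mono _ _ _ h3 h2 (hsuccsub m))
  refine ⟨T, ⟨hroot, hcomp, hlegal, hcl, hne, hmeas⟩, ?_⟩
  intro f hf
  set L := l.length with hL
  have h1 := hf (L + 1)
  have hlen1 : (List.ofFn fun i : Fin (L + 1) => f i).length = L + 1 := by simp
  rcases h1 with hp | ⟨x, hx, hmem⟩
  · exact absurd hp.length_le (by omega)
  · have heq : (List.ofFn fun i : Fin (L + 1) => f i) = l ++ [x] := by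
      rcases ((hS x hx).1).2.1 _ hmem with h | h
      · exact h.eq_of_length (by simp [List.length_append, hL])
      · exact (h.eq_of_length (by simp [List.length_append, hL])).symm
    have hbr : BranchIn (S x) f := by
      intro n
      rcases le_or_gt n (L + 1) with h | h
      · have hpre : (List.ofFn fun i : Fin n => f i) <+:
            (List.ofFn fun i : Fin (L + 1) => f i) := ofFn_prefix f h
        exact mem_of_prefix_closed ((hS x hx).1).2.2.2.1 _ hmem _ hpre
      · have h2 := hf n
        rcases h2 with hp | ⟨x', hx', hm'⟩
        · exact absurd hp.length_le (by simp; omega)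
        · have hpre' : l ++ [x'] <+: (List.ofFn fun i : Fin n => f i) := by
            rcases ((hS x' hx').1).2.1 _ hm' with h' | h'
            · have : (List.ofFn fun i : Fin n => f i) = l ++ [x'] :=
                h'.eq_of_length (le_antisymm h'.length_le
                  (by simp [List.length_append]; omega))
              rw [this]
            · exact h'
          have hpre : l ++ [x] <+: (List.ofFn fun i : Fin n => f i) := by
            rw [← heq]; exact ofFn_prefix f (by omega)
          have : l ++ [x'] = l ++ [x] := by
            have hpp := List.prefix_of_prefix_length_le hpre' hpre
              (by simp [List.length_append])
            exact hpp.eq_of_length (by simp [List.length_append])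
          have hxx : x' = x := by
            have := List.append_cancel_left this
            simpa using this
          rwa [hxx] at hm'
    exact (hS x hx).2 f hbr

/-- Legal nodes lying in `W` are Bad: take the full subtree with stem `l`. -/
lemma bad_of_mem_W (a : ℕ → Finset ℕ) (norm : ℕ → Set ℕ → ℕ) (W : Set (List ℕ))
    (ha : ∀ n, (a n).Nonempty) {l : List ℕ} (hl : Legal a l) (hW : l ∈ W) :
    Bad a norm W l := by
  refine ⟨{m | Legal a m ∧ (m <+: l ∨ l <+: m)},
    ⟨⟨hl, Or.inl (List.prefix_refl l)⟩, fun m hm => hm.2, fun m hm => hm.1, ?_, ?_, ?_⟩, ?_⟩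
  · rintro m y ⟨hleg, hcomp⟩
    refine ⟨Legal.of_prefix ⟨[y], rfl⟩ hleg, ?_⟩
    rcases hcomp with h | h
    · exact Or.inl (List.IsPrefix.trans ⟨[y], rfl⟩ h)
    · rcases List.prefix_concat_iff.mp h with rfl | h
      · exact Or.inl ⟨[y], rfl⟩
      · exact Or.inr h
  · rintro m ⟨hleg, hcomp⟩
    by_cases hlm : l <+: m
    · obtain ⟨x, hxa⟩ := ha m.length
      exact ⟨x, ⟨Legal.concat hleg hxa, Or.inr (hlm.trans ⟨[x], rfl⟩)⟩⟩
    · have hp : m <+: l := by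
        rcases hcomp with h | h
        · exact h
        · exact absurd h hlm
      obtain ⟨t, rfl⟩ := hp
      cases t with
      | nil => exact absurd (List.prefix_refl _ |>.trans ⟨[], by simp⟩) hlm
      | cons y t' =>
        refine ⟨y, ⟨Legal.of_prefix ⟨t', by simp⟩ hl, Or.inl ⟨t', by simp⟩⟩⟩
  · rintro m ⟨hleg, _⟩ hlm
    have hss : Succs {m' | Legal a m' ∧ (m' <+: l ∨ l <+: m')} m = ↑(a m.length) := by
      ext x
      constructor
      · intro hx
        exact Legal.concat_mem hx.1
      · intro hx
        exact ⟨Legal.concat hleg hx, Or.inr (hlm.trans ⟨[x], rfl⟩)⟩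
    rw [hss]
    exact Nat.sub_le _ _
  · intro f hf
    refine ⟨l.length, ?_⟩
    have h1 := hf l.length
    have hlen : (List.ofFn fun i : Fin l.length => f i).length = l.length := by simp
    have heq : (List.ofFn fun i : Fin l.length => f i) = l := by
      rcases h1.2 with h | h
      · exact h.eq_of_length hlen
      · exact (h.eq_of_length hlen.symm).symm
    rwa [heq]

theorem stmt_13 (a : ℕ → Finset ℕ) (ha : ∀ n, (a n).Nonempty)
    (F₀ : ℕ → ℕ) (norm : ℕ → Set ℕ → ℕ)
    -- each `norm n` is a logarithmic measure on `a n`: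
    (mono : ∀ n, ∀ x y : Set ℕ, x.Nonempty → x ⊆ y → y ⊆ ↑(a n) →
      norm n x ≤ norm n y)
    (split : ∀ n, ∀ x x₁ x₂ : Set ℕ, x ⊆ ↑(a n) → x.Nonempty → x = x₁ ∪ x₂ →
      (x₁.Nonempty ∧ norm n x - 1 ≤ norm n x₁) ∨
      (x₂.Nonempty ∧ norm n x - 1 ≤ norm n x₂))
    -- `norm n` is `F₀ n`-additive:
    (additive : ∀ n, ∀ c : Fin (F₀ n) → Set ℕ, (⋃ i, c i) = ↑(a n) →
      ∃ i, norm n (↑(a n)) - 1 ≤ norm n (c i))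
    -- the measure of the full successor sets tends to infinity:
    (hinf : Filter.Tendsto (fun n => norm n (↑(a n))) Filter.atTop Filter.atTop)
    (W : Set (List ℕ))
    -- there is no `T' ≤* T` all of whose branches meet `W`:
    (hno : ¬ ∃ S : Set (List ℕ), GoodSubtree a norm S ∧
      ∀ f : ℕ → ℕ, BranchIn S f → ∃ n : ℕ, (List.ofFn fun i : Fin n => f i) ∈ W) :
    ∃ S : Set (List ℕ), GoodSubtree a norm S ∧ ∀ l ∈ S, l ∉ W := by
  classical
  have hB0 : ¬ Bad a norm W [] := by
    rintro ⟨S, ⟨h1, h2, h3, h4, h5, h6⟩, hbr⟩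
    exact hno ⟨S, ⟨⟨h1, h3, h4⟩, h5, fun l hl => h6 l hl (List.nil_prefix)⟩, hbr⟩
  set S : Set (List ℕ) :=
    {m | Legal a m ∧ ∀ p, p <+: m → ¬ Bad a norm W p} with hSdef
  have hroot : [] ∈ S := by
    refine ⟨fun i => (Nat.not_lt_zero _ i.isLt).elim, fun p hp => ?_⟩
    rw [List.prefix_nil.mp hp]
    exact hB0
  have hkey : ∀ m ∈ S, (Succs S m).Nonempty ∧
      norm m.length (↑(a m.length)) - 1 ≤ norm m.length (Succs S m) := by
    rintro m ⟨hleg, hnb⟩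
    set n := m.length with hn
    set G : Set ℕ := {x | x ∈ a n ∧ Bad a norm W (m ++ [x])} with hG
    set H : Set ℕ := {x | x ∈ a n ∧ ¬ Bad a norm W (m ++ [x])} with hH
    have hcup : (↑(a n) : Set ℕ) = G ∪ H := by
      ext x
      by_cases hx : Bad a norm W (m ++ [x]) <;> simp [hG, hH, hx]
    have hsp := split n (↑(a n)) G H subset_rfl
      (by obtain ⟨x, hx⟩ := ha n; exact ⟨x, by simpa using hx⟩) hcup
    rcases hsp with ⟨hGne, hGn⟩ | ⟨hHne, hHn⟩
    · exfalso
      refine hnb m (List.prefix_refl m) ?_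
      exact glue a norm W mono hleg (fun x hx => by simpa using hx.1) hGne hGn
        (fun x hx => hx.2)
    · have hSH : Succs S m = H := by
        ext x
        constructor
        · intro hx
          exact ⟨Legal.concat_mem hx.1, hx.2 _ (List.prefix_refl _)⟩
        · intro hx
          refine ⟨Legal.concat hleg hx.1, fun p hp => ?_⟩
          rcases List.prefix_concat_iff.mp hp with rfl | hp
          · exact hx.2
          · exact hnb p hp
      rw [hSH]
      exact ⟨hHne, hHn⟩
  refine ⟨S, ⟨⟨hroot, fun l hl => hl.1, fun l x hlx =>
    ⟨Legal.of_prefix ⟨[x], rfl⟩ hlx.1,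
      fun p hp => hlx.2 p (hp.trans ⟨[x], rfl⟩)⟩⟩,
    fun l hl => (hkey l hl).1, fun l hl => (hkey l hl).2⟩, ?_⟩
  intro l hl hW
  exact hl.2 l (List.prefix_refl l) (bad_of_mem_W a norm W ha hl.1 hW)
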